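/- Let B be an anti-symmetric quiver matrix on n vertex pairs, let i : Fin n, and suppose there is no path through Sum.inl i. Assume that for every j : Fin n either (b̄ i j ≥ 0 and b̄ j i ≤ 0) or (b̄ i j ≤ 0 and b̄ j i ≥ 0), where b̄ is the shortened exchange matrix of B. Put B' := μ_{Sum.inr i}(μ_{Sum.inl i}(B)) and let b̄' be the shortened exchange matrix of B'. Then for all j, k : Fin n with j ≠ i and k ≠ i one has b̄' j k = b̄ j k + (max 0 (-(b̄ j i))) * b̄ i k + (max 0 (b̄ i k)) * b̄ j i. -/

import Mathlib

/-- Matrix mutation at an index `v`. -/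
def mutate {ι : Type*} [DecidableEq ι] (B : Matrix ι ι ℤ) (v : ι) : Matrix ι ι ℤ :=
  Matrix.of fun x y =>
    if x = v ∨ y = v then -B x y
    else B x y + (B x v).sign * max (B x v * B v y) 0

/-- Anti-symmetric quiver matrix on `n` vertex pairs. -/
def IsAntiSymQuiver {n : ℕ} (B : Matrix (Fin n ⊕ Fin n) (Fin n ⊕ Fin n) ℤ) : Prop :=
  (∀ x y, B x y = - B y x) ∧
  (∀ x y, B x y = B (Sum.swap y) (Sum.swap x)) ∧
  (∀ x, B x (Sum.swap x) = 0)

/-- The (square) shortened exchange matrix. -/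
def sbar {n : ℕ} (B : Matrix (Fin n ⊕ Fin n) (Fin n ⊕ Fin n) ℤ) : Fin n → Fin n → ℤ :=
  fun j k => B (Sum.inl j) (Sum.inl k) + B (Sum.inr j) (Sum.inl k)

/-- No path through the vertex `Sum.inl i`. -/
def NoPathThrough {n : ℕ} (B : Matrix (Fin n ⊕ Fin n) (Fin n ⊕ Fin n) ℤ) (i : Fin n) : Prop :=
  ∀ x, ¬ (0 < B x (Sum.inl i) ∧ 0 < B (Sum.inl i) (Sum.swap x))

lemma key_sign_max (b c : ℤ) :
    b.sign * max (b * c) 0 = max b 0 * max c 0 - max (-b) 0 * max (-c) 0 := by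
  rcases lt_trichotomy b 0 with hb | hb | hb
  · have h1 : b.sign = -1 := Int.sign_eq_neg_one_iff_neg.mpr hb
    have h2 : max b 0 = 0 := by omega
    have h3 : max (-b) 0 = -b := by omega
    rw [h1, h2, h3]
    have h4 : (-b) * max (-c) 0 = max (b * c) 0 := by
      rw [mul_max_of_nonneg _ _ (by omega : (0:ℤ) ≤ -b)]
      ring_nf
    linarith [h4]
  · subst hb; simp
  · have h1 : b.sign = 1 := Int.sign_eq_one_iff_pos.mpr hb
    have h2 : max b 0 = b := by omega
    have h3 : max (-b) 0 = 0 := by omega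
    rw [h1, h2, h3]
    have h4 : b * max c 0 = max (b * c) 0 := by
      rw [mul_max_of_nonneg _ _ (by omega : (0:ℤ) ≤ b)]
      ring_nf
    linarith [h4]

lemma arith_key (p q r s : ℤ)
    (hb : (0 ≤ q ∧ q ≤ p) ∨ (p ≤ q ∧ q ≤ 0))
    (hc : (0 ≤ s ∧ s ≤ r) ∨ (r ≤ s ∧ s ≤ 0)) :
    p.sign * max (p * r) 0 + (-q).sign * max ((-q) * (-s)) 0 +
      (q.sign * max (q * r) 0 + (-p).sign * max ((-p) * (-s)) 0) =
    max 0 (-(p + q)) * (r + -s) + max 0 (r + -s) * (p + q) := by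
  rw [key_sign_max p r, key_sign_max (-q) (-s), key_sign_max q r, key_sign_max (-p) (-s)]
  simp only [neg_neg]
  rcases hb with ⟨h1, h2⟩ | ⟨h1, h2⟩ <;> rcases hc with ⟨h3, h4⟩ | ⟨h3, h4⟩
  · rw [show max p 0 = p by omega, show max (-p) 0 = 0 by omega,
      show max q 0 = q by omega, show max (-q) 0 = 0 by omega,
      show max r 0 = r by omega, show max (-r) 0 = 0 by omega,
      show max s 0 = s by omega, show max (-s) 0 = 0 by omega,
      show max 0 (-(p + q)) = 0 by omega, show max 0 (r + -s) = r + -s by omega]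
    ring
  · rw [show max p 0 = p by omega, show max (-p) 0 = 0 by omega,
      show max q 0 = q by omega, show max (-q) 0 = 0 by omega,
      show max r 0 = 0 by omega, show max (-r) 0 = -r by omega,
      show max s 0 = 0 by omega, show max (-s) 0 = -s by omega,
      show max 0 (-(p + q)) = 0 by omega, show max 0 (r + -s) = 0 by omega]
    ring
  · rw [show max p 0 = 0 by omega, show max (-p) 0 = -p by omega,
      show max q 0 = 0 by omega, show max (-q) 0 = -q by omega,
      show max r 0 = r by omega, show max (-r) 0 = 0 by omega,
      show max s 0 = s by omega, show max (-s) 0 = 0 by omega,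
      show max 0 (-(p + q)) = -(p + q) by omega, show max 0 (r + -s) = r + -s by omega]
    ring
  · rw [show max p 0 = 0 by omega, show max (-p) 0 = -p by omega,
      show max q 0 = 0 by omega, show max (-q) 0 = -q by omega,
      show max r 0 = 0 by omega, show max (-r) 0 = -r by omega,
      show max s 0 = 0 by omega, show max (-s) 0 = -s by omega,
      show max 0 (-(p + q)) = -(p + q) by omega, show max 0 (r + -s) = 0 by omega]
    ring

theorem stmt1 {n : ℕ} (B : Matrix (Fin n ⊕ Fin n) (Fin n ⊕ Fin n) ℤ)
    (hB : IsAntiSymQuiver B) (i : Fin n) (hpath : NoPathThrough B i)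
    (hsign : ∀ j : Fin n,
      (0 ≤ sbar B i j ∧ sbar B j i ≤ 0) ∨ (sbar B i j ≤ 0 ∧ 0 ≤ sbar B j i)) :
    ∀ j k : Fin n, j ≠ i → k ≠ i →
      sbar (mutate (mutate B (Sum.inl i)) (Sum.inr i)) j k =
        sbar B j k + max 0 (-(sbar B j i)) * sbar B i k
          + max 0 (sbar B i k) * sbar B j i := by
  intro j k hj hk
  obtain ⟨hskew, hsym, hzero⟩ := hB
  have hii : B (Sum.inl i) (Sum.inr i) = 0 := by simpa using hzero (Sum.inl i)
  have hii' : B (Sum.inr i) (Sum.inl i) = 0 := by rw [hskew, hii]; ring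
  -- abbreviations
  set p := B (Sum.inl j) (Sum.inl i) with hp
  set q := B (Sum.inr j) (Sum.inl i) with hq
  set r := B (Sum.inl i) (Sum.inl k) with hr
  set s := B (Sum.inl i) (Sum.inr k) with hs
  have e1 : B (Sum.inl j) (Sum.inr i) = -q := by
    rw [hsym (Sum.inl j) (Sum.inr i)]; simp only [Sum.swap_inl, Sum.swap_inr]
    rw [hskew]
  have e2 : B (Sum.inr j) (Sum.inr i) = -p := by
    rw [hsym (Sum.inr j) (Sum.inr i)]; simp only [Sum.swap_inl, Sum.swap_inr]
    rw [hskew]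
  have e3 : B (Sum.inr i) (Sum.inl k) = -s := by
    rw [hsym (Sum.inr i) (Sum.inl k)]; simp only [Sum.swap_inl, Sum.swap_inr]
    rw [hskew]
  have e4 : B (Sum.inr i) (Sum.inl j) = q := by
    rw [hsym (Sum.inr i) (Sum.inl j)]; simp only [Sum.swap_inl, Sum.swap_inr]; rfl
  have e5 : B (Sum.inl i) (Sum.inl j) = -p := by rw [hskew]
  have e6 : B (Sum.inl i) (Sum.inr j) = -q := by rw [hskew]
  have e7 : B (Sum.inl k) (Sum.inl i) = -r := by rw [hskew]
  have e8 : B (Sum.inr k) (Sum.inl i) = -s := by rw [hskew]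
  -- hypotheses on signs
  have Hp1 := hpath (Sum.inl j)
  have Hp2 := hpath (Sum.inr j)
  have Hp3 := hpath (Sum.inl k)
  have Hp4 := hpath (Sum.inr k)
  simp only [Sum.swap_inl, Sum.swap_inr] at Hp1 Hp2 Hp3 Hp4
  rw [e6] at Hp1
  rw [e5] at Hp2
  rw [e7] at Hp3
  rw [e8] at Hp4
  have Hs1 := hsign j
  have Hs2 := hsign k
  simp only [sbar] at Hs1 Hs2
  rw [e5, e4] at Hs1
  rw [e7, e8, e3] at Hs2
  have hb : (0 ≤ q ∧ q ≤ p) ∨ (p ≤ q ∧ q ≤ 0) := by omega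
  have hc : (0 ≤ s ∧ s ≤ r) ∨ (r ≤ s ∧ s ≤ 0) := by omega
  simp only [sbar, mutate, Matrix.of_apply, Sum.inl.injEq, Sum.inr.injEq, reduceCtorEq,
    hj, hk, or_self, or_false, false_or, if_false, ite_false]
  rw [hii, hii']
  simp only [mul_zero, zero_mul, max_self, Int.sign_zero, add_zero]
  rw [e1, e2, e3]
  have := arith_key p q r s hb hc
  linarith [this]
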